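/- A normalized pile of k nonempty twinstacks, where the bottom twinstack contains at least two elements, has exactly 2^k distinct realizations as deque lists; if the bottom twinstack contains exactly one element, it has exactly 2^{k−1} distinct realizations. -/

import Mathlib

/-- Realize a pile of twinstacks (listed top twinstack first) as a deque list, given an
orientation (`false` = default, `true` = reversed) for each twinstack: starting from the
bottom twinstack and an empty deque, the left-stack elements are appended to the left end
and the right-stack elements to the right end (swapped when reversed). -/
def realizePile (pile : List (List ℕ × List ℕ)) (eps : List Bool) : List ℕ :=
  List.foldr
    (fun tb cur =>
      if tb.2 then tb.1.2 ++ cur ++ tb.1.1.reverse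
      else tb.1.1 ++ cur ++ tb.1.2.reverse)
    [] (pile.zip eps)

lemma realize_nil (eps : List Bool) : realizePile [] eps = [] := rfl

lemma realize_cons (tb : List ℕ × List ℕ) (pile : List (List ℕ × List ℕ)) (e : Bool)
    (eps : List Bool) :
    realizePile (tb :: pile) (e :: eps) =
      if e then tb.2 ++ realizePile pile eps ++ tb.1.reverse
      else tb.1 ++ realizePile pile eps ++ tb.2.reverse := rfl

lemma realize_length (pile : List (List ℕ × List ℕ)) (eps : List Bool)
    (h : eps.length = pile.length) :
    (realizePile pile eps).length = (pile.map fun t => t.1.length + t.2.length).sum := by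
  induction pile generalizing eps with
  | nil => simp [realize_nil]
  | cons tb P ih =>
    cases eps with
    | nil => simp at h
    | cons e es =>
      simp only [List.length_cons, Nat.succ.injEq] at h
      rw [realize_cons]
      split <;> simp [ih es h] <;> omega

lemma realize_mem {pile : List (List ℕ × List ℕ)} {eps : List Bool}
    (h : eps.length = pile.length) {x : ℕ}
    (hx : x ∈ realizePile pile eps) : ∃ t ∈ pile, x ∈ t.1 ++ t.2 := by
  induction pile generalizing eps with
  | nil => simp [realize_nil] at hx
  | cons tb P ih =>
    cases eps with
    | nil => simp at h
    | cons e es =>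
      simp only [List.length_cons, Nat.succ.injEq] at h
      rw [realize_cons] at hx
      have hx' : x ∈ tb.1 ∨ x ∈ tb.2 ∨ x ∈ realizePile P es := by
        cases e <;> simp [List.mem_append] at hx <;> tauto
      rcases hx' with hx' | hx' | hx'
      · exact ⟨tb, by simp, by simp [hx']⟩
      · exact ⟨tb, by simp, by simp [hx']⟩
      · obtain ⟨t, ht, hxt⟩ := ih h hx'
        exact ⟨t, by simp [ht], hxt⟩

lemma realize_ne_nil {pile : List (List ℕ × List ℕ)} {eps : List Bool}
    (h : eps.length = pile.length) (hne : pile ≠ [])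
    (htw : ∀ t ∈ pile, t.1 ≠ [] ∨ t.2 ≠ []) :
    realizePile pile eps ≠ [] := by
  intro hcon
  have hl := realize_length pile eps h
  rw [hcon] at hl
  rcases pile with _ | ⟨q, P⟩
  · exact hne rfl
  · simp at hl
    have := htw q (by simp)
    rcases this with h1 | h1
    · have : q.1.length = 0 := by omega
      simp [List.length_eq_zero_iff] at this; exact h1 this
    · have : q.2.length = 0 := by omega
      simp [List.length_eq_zero_iff] at this; exact h1 this

lemma swap_ne (t1 t2 cur cur' : List ℕ)
    (hnd : (t1 ++ t2).Nodup) (hone : t1 ≠ [] ∨ t2 ≠ [])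
    (hc : cur ≠ []) (hc' : cur' ≠ [])
    (hsm : ∀ x ∈ t1 ++ t2, ∀ y ∈ cur, x < y)
    (hsm' : ∀ x ∈ t1 ++ t2, ∀ y ∈ cur', x < y) :
    t1 ++ cur ++ t2.reverse ≠ t2 ++ cur' ++ t1.reverse := by
  intro heq
  rcases t1 with _ | ⟨a, t1'⟩ <;> rcases t2 with _ | ⟨b, t2'⟩
  · simp at hone
  · rcases cur with _ | ⟨c, cs⟩
    · exact hc rfl
    · have hhd := congrArg List.head? heq
      simp at hhd
      have : b < c := hsm b (by simp) c (by simp)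
      omega
  · rcases cur' with _ | ⟨c, cs⟩
    · exact hc' rfl
    · have hhd := congrArg List.head? heq
      simp at hhd
      have : a < c := hsm' a (by simp) c (by simp)
      omega
  · have hhd := congrArg List.head? heq
    simp at hhd
    rw [List.nodup_append] at hnd
    exact hnd.2.2 a (List.mem_cons_self (a := a) (l := t1')) a
      (by rw [hhd]; exact (List.mem_cons_self (a := b) (l := t2'))) rfl

lemma bottom_ne (t1 t2 : List ℕ) (h1 : List.Pairwise (· < ·) t1) (h2 : List.Pairwise (· < ·) t2)
    (hnd : (t1 ++ t2).Nodup) (hlen : 2 ≤ t1.length + t2.length) :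
    t1 ++ t2.reverse ≠ t2 ++ t1.reverse := by
  intro heq
  rcases t1 with _ | ⟨a, t1'⟩ <;> rcases t2 with _ | ⟨b, t2'⟩
  · simp at hlen
  · rcases t2'.eq_nil_or_concat with rfl | ⟨L, m, rfl⟩
    · simp at hlen
    · simp at heq
      have hm : m = b := heq.1
      have : b < m := (List.pairwise_cons.mp h2).1 m (by simp)
      omega
  · rcases t1'.eq_nil_or_concat with rfl | ⟨L, m, rfl⟩
    · simp at hlen
    · simp at heq
      have hm : a = m := heq.1
      have : a < m := (List.pairwise_cons.mp h1).1 m (by simp)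
      omega
  · have hhd := congrArg List.head? heq
    simp at hhd
    rw [List.nodup_append] at hnd
    exact hnd.2.2 a (List.mem_cons_self (a := a) (l := t1')) a
      (by rw [hhd]; exact (List.mem_cons_self (a := b) (l := t2'))) rfl

lemma realize_inj (pile : List (List ℕ × List ℕ)) (hne : pile ≠ [])
    (htw : ∀ t ∈ pile, List.Pairwise (· < ·) t.1 ∧ List.Pairwise (· < ·) t.2 ∧
      (t.1 ++ t.2).Nodup ∧ (t.1 ≠ [] ∨ t.2 ≠ []))
    (hnormal : ∀ (i j : ℕ) (hij : i < j) (hj : j < pile.length),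
      ∀ x ∈ (pile.get ⟨i, Nat.lt_trans hij hj⟩).1 ++ (pile.get ⟨i, Nat.lt_trans hij hj⟩).2,
      ∀ y ∈ (pile.get ⟨j, hj⟩).1 ++ (pile.get ⟨j, hj⟩).2, x < y)
    (eps eps' : List Bool) (he : eps.length = pile.length)
    (he' : eps'.length = pile.length)
    (heq : realizePile pile eps = realizePile pile eps') :
    eps.dropLast = eps'.dropLast ∧
      (2 ≤ (pile.getLast hne).1.length + (pile.getLast hne).2.length → eps = eps') := by
  induction pile generalizing eps eps' with
  | nil => exact absurd rfl hne
  | cons tb P ih =>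
    cases eps with
    | nil => simp at he
    | cons e es =>
      cases eps' with
      | nil => simp at he'
      | cons e' es' =>
        simp only [List.length_cons, Nat.succ.injEq] at he he'
        obtain ⟨s1, s2, nd, ne1⟩ := htw tb (by simp)
        by_cases hP : P = []
        · subst hP
          have hes : es = [] := List.length_eq_zero_iff.mp he
          have hes' : es' = [] := List.length_eq_zero_iff.mp he'
          subst hes; subst hes'
          refine ⟨rfl, fun h2 => ?_⟩
          have h2' : 2 ≤ tb.1.length + tb.2.length := by simpa using h2
          cases e <;> cases e' <;> try rfl
          · exfalso
            rw [realize_cons, realize_cons, realize_nil] at heq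
            simp only [if_true, if_false, Bool.false_eq_true] at heq
            exact bottom_ne tb.1 tb.2 s1 s2 nd h2' (by simpa using heq)
          · exfalso
            rw [realize_cons, realize_cons, realize_nil] at heq
            simp only [if_true, if_false, Bool.false_eq_true] at heq
            exact bottom_ne tb.1 tb.2 s1 s2 nd h2' (by simpa using heq.symm)
        · -- step case
          have htwP : ∀ t ∈ P, List.Pairwise (· < ·) t.1 ∧ List.Pairwise (· < ·) t.2 ∧
              (t.1 ++ t.2).Nodup ∧ (t.1 ≠ [] ∨ t.2 ≠ []) :=
            fun t ht => htw t (List.mem_cons_of_mem _ ht)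
          have hnormalP : ∀ (i j : ℕ) (hij : i < j) (hj : j < P.length),
              ∀ x ∈ (P.get ⟨i, by omega⟩).1 ++ (P.get ⟨i, by omega⟩).2,
              ∀ y ∈ (P.get ⟨j, hj⟩).1 ++ (P.get ⟨j, hj⟩).2, x < y := by
            intro i j hij hj x hx y hy
            exact hnormal (i+1) (j+1) (by omega) (by simp; omega) x hx y hy
          have hcne : realizePile P es ≠ [] :=
            realize_ne_nil he hP (fun t ht => (htwP t ht).2.2.2)
          have hcne' : realizePile P es' ≠ [] :=
            realize_ne_nil he' hP (fun t ht => (htwP t ht).2.2.2)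
          have hsm : ∀ (es₀ : List Bool), es₀.length = P.length →
              ∀ x ∈ tb.1 ++ tb.2, ∀ y ∈ realizePile P es₀, x < y := by
            intro es₀ hlen x hx y hy
            obtain ⟨t, ht, hyt⟩ := realize_mem hlen hy
            obtain ⟨⟨j, hj⟩, rfl⟩ := List.mem_iff_get.mp ht
            exact hnormal 0 (j+1) (by omega) (by simp; omega) x hx y hyt
          have hee : e = e' := by
            by_contra hee
            rw [realize_cons, realize_cons] at heq
            cases e <;> cases e'
            · exact hee rfl
            · simp only [if_true, if_false, Bool.false_eq_true] at heq
              exact swap_ne tb.1 tb.2 _ _ nd ne1 hcne hcne'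
                (hsm es he) (hsm es' he') heq
            · simp only [if_true, if_false, Bool.false_eq_true] at heq
              refine swap_ne tb.2 tb.1 _ _ ?_ ne1.symm hcne hcne' ?_ ?_ heq
              · exact List.nodup_append_comm.mp nd
              · intro x hx y hy
                refine hsm es he x ?_ y hy
                simp only [List.mem_append] at hx ⊢; tauto
              · intro x hx y hy
                refine hsm es' he' x ?_ y hy
                simp only [List.mem_append] at hx ⊢; tauto
            · exact hee rfl
          subst hee
          have hcc : realizePile P es = realizePile P es' := by
            rw [realize_cons, realize_cons] at heq
            cases e <;> simp only [if_true, if_false, Bool.false_eq_true] at heq <;>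
            · rw [List.append_assoc, List.append_assoc] at heq
              have h1 := List.append_cancel_left heq
              exact List.append_cancel_right h1
          obtain ⟨ihd, ihb⟩ := ih hP htwP hnormalP es es' he he' hcc
          constructor
          · rw [List.dropLast_cons_of_ne_nil (List.ne_nil_of_length_pos (by rw [he]; exact List.length_pos_iff.mpr hP)),
              List.dropLast_cons_of_ne_nil (List.ne_nil_of_length_pos (by rw [he']; exact List.length_pos_iff.mpr hP)),
              ihd]
          · intro h2
            rw [List.getLast_cons hP] at h2
            rw [ihb h2]

lemma realize_last (P : List (List ℕ × List ℕ)) (tb : List ℕ × List ℕ)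
    (h1 : tb.1.length + tb.2.length = 1) (xs : List Bool) (b b' : Bool)
    (hx : xs.length = P.length) :
    realizePile (P ++ [tb]) (xs ++ [b]) = realizePile (P ++ [tb]) (xs ++ [b']) := by
  unfold realizePile
  rw [List.zip_append hx.symm, List.zip_append hx.symm, List.foldr_append, List.foldr_append]
  congr 1
  simp only [List.zip_cons_cons, List.zip_nil_right, List.foldr_cons, List.foldr_nil]
  rcases tb with ⟨t1, t2⟩
  rcases t1 with _ | ⟨a, t1'⟩ <;> rcases t2 with _ | ⟨c, t2'⟩ <;> simp_all <;>
    cases b <;> cases b' <;> simp_all <;> omega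

/-- A normalized pile of `k` nonempty twinstacks has exactly `2^k` realizations when the
bottom twinstack has at least two elements, and exactly `2^(k-1)` realizations when the
bottom twinstack has exactly one element. -/
theorem card_realizations (pile : List (List ℕ × List ℕ)) (hne : pile ≠ [])
    (htw : ∀ t ∈ pile, List.Pairwise (· < ·) t.1 ∧ List.Pairwise (· < ·) t.2 ∧
      (t.1 ++ t.2).Nodup ∧ (∀ x ∈ t.1 ++ t.2, 0 < x) ∧ (t.1 ≠ [] ∨ t.2 ≠ []))
    (hnormal : ∀ (i j : ℕ) (hij : i < j) (hj : j < pile.length),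
      ∀ x ∈ (pile.get ⟨i, by omega⟩).1 ++ (pile.get ⟨i, by omega⟩).2,
      ∀ y ∈ (pile.get ⟨j, hj⟩).1 ++ (pile.get ⟨j, hj⟩).2, x < y) :
    (2 ≤ (pile.getLast hne).1.length + (pile.getLast hne).2.length →
      {d : List ℕ | ∃ eps : List Bool, eps.length = pile.length ∧
        realizePile pile eps = d}.ncard = 2 ^ pile.length) ∧
    ((pile.getLast hne).1.length + (pile.getLast hne).2.length = 1 →
      {d : List ℕ | ∃ eps : List Bool, eps.length = pile.length ∧
        realizePile pile eps = d}.ncard = 2 ^ (pile.length - 1)) := by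
  have htw' : ∀ t ∈ pile, List.Pairwise (· < ·) t.1 ∧ List.Pairwise (· < ·) t.2 ∧
      (t.1 ++ t.2).Nodup ∧ (t.1 ≠ [] ∨ t.2 ≠ []) :=
    fun t ht => ⟨(htw t ht).1, (htw t ht).2.1, (htw t ht).2.2.1, (htw t ht).2.2.2.2⟩
  have hk : 1 ≤ pile.length := List.length_pos_iff.mpr hne
  constructor
  · intro h2
    have hset : {d : List ℕ | ∃ eps : List Bool, eps.length = pile.length ∧
          realizePile pile eps = d}
        = Set.range (fun b : Fin pile.length → Bool => realizePile pile (List.ofFn b)) := by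
      ext d
      simp only [Set.mem_setOf_eq, Set.mem_range]
      constructor
      · rintro ⟨eps, hlen, rfl⟩
        refine ⟨fun i => eps.get (Fin.cast hlen.symm i), ?_⟩
        congr 1
        apply List.ext_get (by simp [hlen])
        intro i hi1 hi2
        simp
      · rintro ⟨b, rfl⟩
        exact ⟨List.ofFn b, by simp, rfl⟩
    rw [hset]
    have hinj : Function.Injective
        (fun b : Fin pile.length → Bool => realizePile pile (List.ofFn b)) := by
      intro b b' hbb
      have := (realize_inj pile hne htw' hnormal (List.ofFn b) (List.ofFn b')
        (by simp) (by simp) hbb).2 h2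
      exact List.ofFn_injective this
    rw [← Nat.card_coe_set_eq, Nat.card_range_of_injective hinj]
    simp [Nat.card_eq_fintype_card]
  · intro h1
    have hP : pile.dropLast ++ [pile.getLast hne] = pile := List.dropLast_append_getLast hne
    have hset : {d : List ℕ | ∃ eps : List Bool, eps.length = pile.length ∧
          realizePile pile eps = d}
        = Set.range (fun b : Fin (pile.length - 1) → Bool =>
            realizePile pile (List.ofFn b ++ [false])) := by
      ext d
      simp only [Set.mem_setOf_eq, Set.mem_range]
      constructor
      · rintro ⟨eps, hlen, rfl⟩
        have hene : eps ≠ [] := List.ne_nil_of_length_pos (by omega)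
        have hdl : eps.dropLast.length = pile.length - 1 := by
          rw [List.length_dropLast, hlen]
        have key : realizePile pile eps = realizePile pile (eps.dropLast ++ [false]) := by
          calc realizePile pile eps
              = realizePile (pile.dropLast ++ [pile.getLast hne])
                (eps.dropLast ++ [eps.getLast hene]) := by
                rw [hP, List.dropLast_append_getLast hene]
            _ = realizePile (pile.dropLast ++ [pile.getLast hne])
                (eps.dropLast ++ [false]) := by
                apply realize_last _ _ h1
                rw [hdl, List.length_dropLast]
            _ = realizePile pile (eps.dropLast ++ [false]) := by rw [hP]
        refine ⟨fun i => eps.dropLast.get (Fin.cast hdl.symm i), ?_⟩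
        have hofn : List.ofFn (fun i => eps.dropLast.get (Fin.cast hdl.symm i))
            = eps.dropLast := by
          apply List.ext_get (by simp [hdl])
          intro i hi1 hi2
          simp
        rw [hofn]
        exact key.symm
      · rintro ⟨b, rfl⟩
        exact ⟨List.ofFn b ++ [false], by simp; omega, rfl⟩
    rw [hset]
    have hinj : Function.Injective
        (fun b : Fin (pile.length - 1) → Bool =>
          realizePile pile (List.ofFn b ++ [false])) := by
      intro b b' hbb
      have hlen : (List.ofFn b ++ [false]).length = pile.length := by simp; omega
      have hlen' : (List.ofFn b' ++ [false]).length = pile.length := by simp; omega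
      have := (realize_inj pile hne htw' hnormal (List.ofFn b ++ [false])
        (List.ofFn b' ++ [false]) hlen hlen' hbb).1
      rw [List.dropLast_concat, List.dropLast_concat] at this
      exact List.ofFn_injective this
    rw [← Nat.card_coe_set_eq, Nat.card_range_of_injective hinj]
    simp [Nat.card_eq_fintype_card]
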